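/- Let V be a finite-dimensional real vector space and ω : V → V → ℝ a nondegenerate alternating bilinear form. Let X, Z ∈ V with ω(X, Z) > 0, and let η := {v ∈ V : ω(Z, v) = 0 and ω(X, v) = 0}. Then there exists a linear map J : V → V such that: J ∘ J = −id; ω(Ju, Jv) = ω(u,v) for all u, v ∈ V; ω(v, Jv) > 0 for every v ≠ 0 (J is ω-compatible); J X = Z; and J(η) = η. -/

import Mathlib

set_option maxHeartbeats 1000000

open Module

section Step
variable {V : Type*} [AddCommGroup V] [Module ℝ V]

private lemma skew13 (ω : V →ₗ[ℝ] V →ₗ[ℝ] ℝ) (halt : ∀ v : V, ω v v = 0) (u v : V) :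
    ω u v = - ω v u := by
  have h := halt (u + v)
  simp [map_add, halt] at h
  linarith

private lemma step13 (ω : V →ₗ[ℝ] V →ₗ[ℝ] ℝ) (halt : ∀ v : V, ω v v = 0)
    (X Z : V) (hc : 0 < ω X Z)
    (J' : ↥(LinearMap.ker (ω Z) ⊓ LinearMap.ker (ω X)) →ₗ[ℝ]
          ↥(LinearMap.ker (ω Z) ⊓ LinearMap.ker (ω X)))
    (hJ'2 : ∀ p, J' (J' p) = -p)
    (hJ'inv : ∀ p q, ω ↑(J' p) ↑(J' q) = ω ↑p ↑q)
    (hJ'pos : ∀ p : ↥(LinearMap.ker (ω Z) ⊓ LinearMap.ker (ω X)), p ≠ 0 → 0 < ω ↑p ↑(J' p)) :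
    ∃ J : V →ₗ[ℝ] V, (∀ v, J (J v) = -v) ∧ (∀ u v, ω (J u) (J v) = ω u v) ∧
      (∀ v, v ≠ 0 → 0 < ω v (J v)) ∧ J X = Z ∧
      J '' ↑(LinearMap.ker (ω Z) ⊓ LinearMap.ker (ω X)) =
        ↑(LinearMap.ker (ω Z) ⊓ LinearMap.ker (ω X)) := by
  obtain ⟨c, hc_def⟩ : ∃ c : ℝ, ω X Z = c := ⟨_, rfl⟩
  rw [hc_def] at hc
  have hc0 : c ≠ 0 := ne_of_gt hc
  have hZX : ω Z X = -c := by rw [skew13 ω halt, hc_def]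
  have hZZ : ω Z Z = 0 := halt Z
  have hXX : ω X X = 0 := halt X
  have hmemZ : ∀ j : ↥(LinearMap.ker (ω Z) ⊓ LinearMap.ker (ω X)), ω Z ↑j = 0 :=
    fun j => j.2.1
  have hmemX : ∀ j : ↥(LinearMap.ker (ω Z) ⊓ LinearMap.ker (ω X)), ω X ↑j = 0 :=
    fun j => j.2.2
  have hmemZ' : ∀ j : ↥(LinearMap.ker (ω Z) ⊓ LinearMap.ker (ω X)), ω (↑j) Z = 0 := by
    intro j; rw [skew13 ω halt, hmemZ]; ring
  have hmemX' : ∀ j : ↥(LinearMap.ker (ω Z) ⊓ LinearMap.ker (ω X)), ω (↑j) X = 0 := by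
    intro j; rw [skew13 ω halt, hmemX]; ring
  set πraw : V →ₗ[ℝ] V :=
    LinearMap.id + c⁻¹ • ((ω Z).smulRight X) - c⁻¹ • ((ω X).smulRight Z) with hπraw
  have hπraw_apply : ∀ v, πraw v = v + (c⁻¹ * ω Z v) • X - (c⁻¹ * ω X v) • Z := by
    intro v
    simp [hπraw, smul_smul]
  have hπmem : ∀ v, πraw v ∈ (LinearMap.ker (ω Z) ⊓ LinearMap.ker (ω X)) := by
    intro v
    rw [Submodule.mem_inf]
    constructor
    · simp only [LinearMap.mem_ker, hπraw_apply, map_sub, map_add, map_smul, smul_eq_mul]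
      rw [hZX, hZZ]
      field_simp; ring
    · simp only [LinearMap.mem_ker, hπraw_apply, map_sub, map_add, map_smul, smul_eq_mul]
      rw [hXX, hc_def]
      field_simp; ring
  set π : V →ₗ[ℝ] ↥(LinearMap.ker (ω Z) ⊓ LinearMap.ker (ω X)) :=
    πraw.codRestrict (LinearMap.ker (ω Z) ⊓ LinearMap.ker (ω X)) hπmem with hπ
  have hπ_coe : ∀ v, (↑(π v) : V) = πraw v := fun v => rfl
  set J : V →ₗ[ℝ] V :=
    (-(c⁻¹) • ((ω Z).smulRight Z)) - c⁻¹ • ((ω X).smulRight X) +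
      (LinearMap.ker (ω Z) ⊓ LinearMap.ker (ω X)).subtype ∘ₗ J' ∘ₗ π with hJ
  have hJapp : ∀ v, J v = -((c⁻¹ * ω Z v) • Z) - (c⁻¹ * ω X v) • X + ↑(J' (π v)) := by
    intro v
    simp [hJ, smul_smul]
  have hJform : ∀ v, J v = (-(c⁻¹ * ω Z v)) • Z + (-(c⁻¹ * ω X v)) • X + ↑(J' (π v)) := by
    intro v; rw [hJapp]; module
  have hvform : ∀ v : V, v = (c⁻¹ * ω X v) • Z + (-(c⁻¹ * ω Z v)) • X + ↑(π v) := by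
    intro v; rw [hπ_coe, hπraw_apply]; module
  have hωl : ∀ (a b : ℝ) (j : ↥(LinearMap.ker (ω Z) ⊓ LinearMap.ker (ω X))) (w : V),
      ω (a • Z + b • X + ↑j) w = a * ω Z w + b * ω X w + ω (↑j) w := by
    intro a b j w
    simp [map_add, map_smul, LinearMap.add_apply, LinearMap.smul_apply]
  have hωr : ∀ (w : V) (a b : ℝ) (j : ↥(LinearMap.ker (ω Z) ⊓ LinearMap.ker (ω X))),
      ω w (a • Z + b • X + ↑j) = a * ω w Z + b * ω w X + ω w ↑j := by
    intro w a b j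
    simp [map_add, map_smul]
  have hηω : ∀ (j : ↥(LinearMap.ker (ω Z) ⊓ LinearMap.ker (ω X))) (w : V),
      ω (↑j) w = ω (↑j) ↑(π w) := by
    intro j w
    conv_lhs => rw [hvform w]
    rw [hωr, hmemZ' j, hmemX' j]
    ring
  have hωZJ : ∀ v, ω Z (J v) = ω X v := by
    intro v
    rw [hJform v, hωr, hZZ, hZX, hmemZ]
    field_simp; ring
  have hωXJ : ∀ v, ω X (J v) = -ω Z v := by
    intro v
    rw [hJform v, hωr, hXX, hc_def, hmemX]
    field_simp; ring
  have hπJ : ∀ v, π (J v) = J' (π v) := by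
    intro v
    apply Subtype.ext
    rw [hπ_coe, hπraw_apply, hωZJ, hωXJ, hJapp v]
    module
  have hJ2 : ∀ v, J (J v) = -v := by
    intro v
    rw [hJapp (J v), hωZJ, hωXJ, hπJ, hJ'2]
    push_cast
    rw [hπ_coe, hπraw_apply]
    module
  have hJX : J X = Z := by
    have hπX : π X = 0 := by
      apply Subtype.ext
      rw [hπ_coe, hπraw_apply, hXX, hZX]
      push_cast
      field_simp; module
    rw [hJapp, hπX, map_zero, hZX, hXX]
    push_cast
    field_simp; module
  have hπeta : ∀ p : ↥(LinearMap.ker (ω Z) ⊓ LinearMap.ker (ω X)), π ↑p = p := by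
    intro p
    apply Subtype.ext
    rw [hπ_coe, hπraw_apply, hmemZ, hmemX]
    simp
  have hJeta : ∀ p : ↥(LinearMap.ker (ω Z) ⊓ LinearMap.ker (ω X)), J ↑p = ↑(J' p) := by
    intro p
    rw [hJapp, hmemZ, hmemX, hπeta]
    simp
  have hinv : ∀ u v, ω (J u) (J v) = ω u v := by
    intro u v
    have e1 : ω (J u) (J v) =
        -(c⁻¹ * ω Z u) * ω X v + c⁻¹ * ω X u * ω Z v + ω (↑(π u) : V) ↑(π v) := by
      conv_lhs => rw [hJform u]
      rw [hωl, hωZJ, hωXJ, hηω (J' (π u)) (J v), hπJ, hJ'inv]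
      ring
    have e2 : ω u v =
        -(c⁻¹ * ω Z u) * ω X v + c⁻¹ * ω X u * ω Z v + ω (↑(π u) : V) ↑(π v) := by
      conv_lhs => rw [hvform u]
      rw [hωl, hηω (π u) v]
      ring
    rw [e1, e2]
  have hpos : ∀ v, v ≠ 0 → 0 < ω v (J v) := by
    intro v hv
    have e : ω v (J v) =
        c⁻¹ * (ω X v) ^ 2 + c⁻¹ * (ω Z v) ^ 2 + ω (↑(π v) : V) ↑(J' (π v)) := by
      nth_rewrite 1 [hvform v]
      rw [hωl, hωZJ, hωXJ, hηω (π v) (J v), hπJ]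
      ring
    have hinv' : (0:ℝ) < c⁻¹ := by positivity
    rcases eq_or_ne (π v) 0 with h | h
    · have hZXv : ω Z v ≠ 0 ∨ ω X v ≠ 0 := by
        by_contra hcon
        push_neg at hcon
        apply hv
        have hd := hvform v
        rw [hcon.1, hcon.2, h] at hd
        simpa using hd
      have hnn : ω (↑(π v) : V) ↑(J' (π v)) = 0 := by
        rw [h]; simp
      rw [e, hnn]
      rcases hZXv with h' | h'
      · nlinarith [sq_nonneg (ω Z v), sq_pos_of_ne_zero h']
      · nlinarith [sq_nonneg (ω X v), sq_pos_of_ne_zero h']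
    · have hp : 0 < ω (↑(π v) : V) ↑(J' (π v)) := hJ'pos _ h
      rw [e]
      nlinarith [sq_nonneg (ω Z v), sq_nonneg (ω X v)]
  refine ⟨J, hJ2, hinv, hpos, hJX, ?_⟩
  apply Set.Subset.antisymm
  · rintro _ ⟨p, hp, rfl⟩
    rw [hJeta ⟨p, hp⟩]
    exact (J' ⟨p, hp⟩).2
  · intro q hq
    refine ⟨-(↑(J' ⟨q, hq⟩) : V), neg_mem (J' ⟨q, hq⟩).2, ?_⟩
    have hcoe : (-(↑(J' ⟨q, hq⟩) : V)) = ↑(-(J' ⟨q, hq⟩)) := by push_cast; ring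
    rw [hcoe, hJeta, map_neg, hJ'2, neg_neg]
end Step

universe u

private lemma compat13 (n : ℕ) : ∀ (V : Type u) [AddCommGroup V] [Module ℝ V]
    [FiniteDimensional ℝ V], Module.finrank ℝ V ≤ n →
    ∀ (ω : V →ₗ[ℝ] V →ₗ[ℝ] ℝ), (∀ v : V, ω v v = 0) → (∀ u : V, (∀ v : V, ω u v = 0) → u = 0) →
    ∃ J : V →ₗ[ℝ] V, (∀ v, J (J v) = -v) ∧ (∀ u v, ω (J u) (J v) = ω u v) ∧
      (∀ v, v ≠ 0 → 0 < ω v (J v)) := by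
  induction n with
  | zero =>
    intro V _ _ _ hrank ω halt hnd
    have : Module.finrank ℝ V = 0 := Nat.le_zero.mp hrank
    have hsub : Subsingleton V := Module.finrank_zero_iff.mp this
    exact ⟨0, fun v => by rw [Subsingleton.elim v 0]; simp,
      fun u v => by rw [Subsingleton.elim u 0, Subsingleton.elim v 0]; simp,
      fun v hv => absurd (Subsingleton.elim v 0) hv⟩
  | succ n ih =>
    intro V _ _ _ hrank ω halt hnd
    by_cases hsub : Subsingleton V
    · exact ⟨0, fun v => by rw [Subsingleton.elim v 0]; simp,
        fun u v => by rw [Subsingleton.elim u 0, Subsingleton.elim v 0]; simp,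
        fun v hv => absurd (Subsingleton.elim v 0) hv⟩
    have : Nontrivial V := not_subsingleton_iff_nontrivial.mp hsub
    obtain ⟨X, hX⟩ := exists_ne (0 : V)
    have hex : ¬ ∀ v : V, ω X v = 0 := fun h => hX (hnd X h)
    push_neg at hex
    obtain ⟨Z', hZ'⟩ := hex
    obtain ⟨Z, hXZ⟩ : ∃ Z : V, 0 < ω X Z := by
      rcases lt_or_gt_of_ne hZ' with h | h
      · exact ⟨-Z', by simpa using h⟩
      · exact ⟨Z', h⟩
    -- the subspace η
    set ηs : Submodule ℝ V := LinearMap.ker (ω Z) ⊓ LinearMap.ker (ω X) with hηs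
    have hskew : ∀ u v : V, ω u v = -ω v u := by
      intro u v
      have h := halt (u + v)
      simp [map_add, halt] at h
      linarith
    have hXnot : X ∉ ηs := by
      intro hmem
      have : ω Z X = 0 := hmem.1
      rw [hskew] at this
      simp at this
      exact absurd this (ne_of_gt hXZ)
    have hlt : Module.finrank ℝ ηs ≤ n := by
      have h1 : ηs < ⊤ := lt_top_iff_ne_top.mpr (fun h => hXnot (h ▸ Submodule.mem_top))
      have h2 := Submodule.finrank_lt (K := ℝ) (V := V) h1.ne
      omega
    obtain ⟨c, hc_def⟩ : ∃ c : ℝ, ω X Z = c := ⟨_, rfl⟩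
    rw [hc_def] at hXZ
    have hc0 : c ≠ 0 := ne_of_gt hXZ
    have hπmem : ∀ v : V, v + (c⁻¹ * ω Z v) • X - (c⁻¹ * ω X v) • Z ∈ ηs := by
      intro v
      rw [hηs, Submodule.mem_inf]
      constructor
      · simp only [LinearMap.mem_ker, map_sub, map_add, map_smul, smul_eq_mul]
        rw [show ω Z X = -c by rw [hskew, hc_def], halt Z]
        field_simp; ring
      · simp only [LinearMap.mem_ker, map_sub, map_add, map_smul, smul_eq_mul]
        rw [halt X, hc_def]
        field_simp; ring
    -- restricted form
    set ωr : ηs →ₗ[ℝ] ηs →ₗ[ℝ] ℝ := ω.compl₁₂ ηs.subtype ηs.subtype with hωr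
    have hωr_apply : ∀ p q : ηs, ωr p q = ω ↑p ↑q := fun p q => rfl
    have halt' : ∀ p : ηs, ωr p p = 0 := fun p => halt ↑p
    have hnd' : ∀ u : ηs, (∀ q : ηs, ωr u q = 0) → u = 0 := by
      intro u hu
      have hcoe : (↑u : V) = 0 := by
        apply hnd
        intro v
        have hXu : ω (↑u : V) X = 0 := by rw [hskew]; rw [u.2.2]; ring
        have hZu : ω (↑u : V) Z = 0 := by rw [hskew]; rw [u.2.1]; ring
        have hw := hu ⟨_, hπmem v⟩
        rw [hωr_apply] at hw
        calc ω (↑u : V) v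
            = ω ↑u (v + (c⁻¹ * ω Z v) • X - (c⁻¹ * ω X v) • Z)
              - (c⁻¹ * ω Z v) * ω ↑u X + (c⁻¹ * ω X v) * ω ↑u Z := by
              simp only [map_sub, map_add, map_smul, smul_eq_mul]; ring
          _ = 0 := by rw [hw, hXu, hZu]; ring
      exact Subtype.ext hcoe
    obtain ⟨J', hJ'2, hJ'inv, hJ'pos⟩ := ih ηs hlt ωr halt' hnd'
    obtain ⟨J, h1, h2, h3, -, -⟩ :=
      step13 ω halt X Z (by rw [hc_def]; exact hXZ) J' hJ'2
        (fun p q => by rw [← hωr_apply, ← hωr_apply]; exact hJ'inv p q)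
        (fun p hp => by rw [← hωr_apply]; exact hJ'pos p hp)
    exact ⟨J, h1, h2, h3⟩

/-- Given a linear symplectic form `ω` on a finite-dimensional real vector space
and `X, Z` with `ω(X,Z) > 0`, there exists an `ω`-invariant, `ω`-compatible complex structure `J`
with `J X = Z` which preserves `η = ker ω(Z,·) ∩ ker ω(X,·)`. -/
theorem stmt_13 {V : Type*} [AddCommGroup V] [Module ℝ V] [FiniteDimensional ℝ V]
    (ω : V →ₗ[ℝ] V →ₗ[ℝ] ℝ)
    (halt : ∀ v : V, ω v v = 0)
    (hnondeg : ∀ u : V, (∀ v : V, ω u v = 0) → u = 0)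
    (X Z : V) (hXZ : 0 < ω X Z)
    (η : Set V) (hη : η = {v : V | ω Z v = 0 ∧ ω X v = 0}) :
    ∃ J : V →ₗ[ℝ] V,
      (∀ v : V, J (J v) = -v) ∧
      (∀ u v : V, ω (J u) (J v) = ω u v) ∧
      (∀ v : V, v ≠ 0 → 0 < ω v (J v)) ∧
      J X = Z ∧
      J '' η = η := by
  have hskew : ∀ u v : V, ω u v = -ω v u := fun u v => skew13 ω halt u v
  set ηs : Submodule ℝ V := LinearMap.ker (ω Z) ⊓ LinearMap.ker (ω X) with hηs
  have hset : η = ↑ηs := by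
    rw [hη, hηs]
    ext v
    simp [Submodule.mem_inf, LinearMap.mem_ker]
  obtain ⟨c, hc_def⟩ : ∃ c : ℝ, ω X Z = c := ⟨_, rfl⟩
  rw [hc_def] at hXZ
  have hc0 : c ≠ 0 := ne_of_gt hXZ
  have hπmem : ∀ v : V, v + (c⁻¹ * ω Z v) • X - (c⁻¹ * ω X v) • Z ∈ ηs := by
    intro v
    rw [hηs, Submodule.mem_inf]
    constructor
    · simp only [LinearMap.mem_ker, map_sub, map_add, map_smul, smul_eq_mul]
      rw [show ω Z X = -c by rw [hskew, hc_def], halt Z]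
      field_simp; ring
    · simp only [LinearMap.mem_ker, map_sub, map_add, map_smul, smul_eq_mul]
      rw [halt X, hc_def]
      field_simp; ring
  set ωr : ηs →ₗ[ℝ] ηs →ₗ[ℝ] ℝ := ω.compl₁₂ ηs.subtype ηs.subtype with hωr
  have hωr_apply : ∀ p q : ηs, ωr p q = ω ↑p ↑q := fun p q => rfl
  have halt' : ∀ p : ηs, ωr p p = 0 := fun p => halt ↑p
  have hnd' : ∀ u : ηs, (∀ q : ηs, ωr u q = 0) → u = 0 := by
    intro u hu
    have hcoe : (↑u : V) = 0 := by
      apply hnondeg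
      intro v
      have hXu : ω (↑u : V) X = 0 := by rw [hskew]; rw [u.2.2]; ring
      have hZu : ω (↑u : V) Z = 0 := by rw [hskew]; rw [u.2.1]; ring
      have hw := hu ⟨_, hπmem v⟩
      rw [hωr_apply] at hw
      calc ω (↑u : V) v
          = ω ↑u (v + (c⁻¹ * ω Z v) • X - (c⁻¹ * ω X v) • Z)
            - (c⁻¹ * ω Z v) * ω ↑u X + (c⁻¹ * ω X v) * ω ↑u Z := by
            simp only [map_sub, map_add, map_smul, smul_eq_mul]; ring
        _ = 0 := by rw [hw, hXu, hZu]; ring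
    exact Subtype.ext hcoe
  obtain ⟨J', hJ'2, hJ'inv, hJ'pos⟩ :=
    compat13 (Module.finrank ℝ ηs) ηs le_rfl ωr halt' hnd'
  obtain ⟨J, h1, h2, h3, h4, h5⟩ :=
    step13 ω halt X Z (by rw [hc_def]; exact hXZ) J' hJ'2
      (fun p q => by rw [← hωr_apply, ← hωr_apply]; exact hJ'inv p q)
      (fun p hp => by rw [← hωr_apply]; exact hJ'pos p hp)
  exact ⟨J, h1, h2, h3, h4, by rw [hset]; exact h5⟩
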